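/- For every integer k ≥ 2 and all integers n ≥ 0 and 0 ≤ h ≤ ⌊n/2⌋, the number of k-noncrossing RNA structures on {1,…,n} with exactly h arcs satisfies S'_k(n,h) = ∑_{j=0}^{h} (−1)^j · binom(n−j, j) · binom(n−2j, 2(h−j)) · f_k(2(h−j), 0). -/

import Mathlib

/-- The arcs form a partial matching: each arc `(i,j)` satisfies `i < j`
and every vertex lies in at most one arc. -/
def IsMatchingArcs (n : ℕ) (A : Finset (Fin n × Fin n)) : Prop :=
  (∀ p ∈ A, p.1 < p.2) ∧
    ∀ p ∈ A, ∀ q ∈ A, p ≠ q →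
      p.1 ≠ q.1 ∧ p.1 ≠ q.2 ∧ p.2 ≠ q.1 ∧ p.2 ≠ q.2

/-- `A` contains `k` mutually crossing arcs
`(i₁,j₁),…,(i_k,j_k)` with `i₁ < ⋯ < i_k < j₁ < ⋯ < j_k`. -/
def HasKCrossing (k n : ℕ) (A : Finset (Fin n × Fin n)) : Prop :=
  ∃ f : Fin k → Fin n × Fin n,
    (∀ i, f i ∈ A) ∧
      StrictMono (fun i => (f i).1) ∧
        StrictMono (fun i => (f i).2) ∧
          ∀ i j, (f i).1 < (f j).2

/-- A `k`-noncrossing digraph on `{1,…,n}`. -/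
def IsKNCDigraph (k n : ℕ) (A : Finset (Fin n × Fin n)) : Prop :=
  IsMatchingArcs n A ∧ ¬ HasKCrossing k n A

/-- The set of isolated (degree `0`) vertices. -/
def IsolatedSet (n : ℕ) (A : Finset (Fin n × Fin n)) : Finset (Fin n) :=
  Finset.univ.filter fun v => ∀ p ∈ A, p.1 ≠ v ∧ p.2 ≠ v

/-- `A` contains a `1`-arc, i.e. an arc of the form `(i, i+1)`. -/
def HasOneArc (n : ℕ) (A : Finset (Fin n × Fin n)) : Prop :=
  ∃ p ∈ A, (p.2 : ℕ) = (p.1 : ℕ) + 1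

/-- A `k`-noncrossing RNA structure on `{1,…,n}`: a `k`-noncrossing digraph
without `1`-arcs. -/
def IsRNAStructure (k n : ℕ) (A : Finset (Fin n × Fin n)) : Prop :=
  IsKNCDigraph k n A ∧ ¬ HasOneArc n A

/-- `fNC k n l` = number of `k`-noncrossing digraphs on `{1,…,n}` with
exactly `l` isolated vertices. -/
noncomputable def fNC (k n l : ℕ) : ℕ :=
  Nat.card {A : Finset (Fin n × Fin n) // IsKNCDigraph k n A ∧ (IsolatedSet n A).card = l}

/-- `SIso k n l` = number of `k`-noncrossing RNA structures on `{1,…,n}` with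
exactly `l` isolated vertices. -/
noncomputable def SIso (k n l : ℕ) : ℕ :=
  Nat.card {A : Finset (Fin n × Fin n) // IsRNAStructure k n A ∧ (IsolatedSet n A).card = l}

/-- `SArc k n h` = number of `k`-noncrossing RNA structures on `{1,…,n}` with
exactly `h` arcs. -/
noncomputable def SArc (k n h : ℕ) : ℕ :=
  Nat.card {A : Finset (Fin n × Fin n) // IsRNAStructure k n A ∧ A.card = h}

/-- `STot k n` = total number of `k`-noncrossing RNA structures on `{1,…,n}`. -/
noncomputable def STot (k n : ℕ) : ℕ :=
  Nat.card {A : Finset (Fin n × Fin n) // IsRNAStructure k n A}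

open Finset
open scoped Classical

namespace NCAux

variable {k m n : ℕ}

/-- Transport of an arc set along a vertex map. -/
def tr (e : Fin m → Fin n) (A : Finset (Fin m × Fin m)) : Finset (Fin n × Fin n) :=
  A.image (Prod.map e e)

lemma prodmap_inj {e : Fin m → Fin n} (he : Function.Injective e) :
    Function.Injective (Prod.map e e : Fin m × Fin m → Fin n × Fin n) := by
  intro p q hpq
  have h1 := congrArg Prod.fst hpq
  have h2 := congrArg Prod.snd hpq
  simp [Prod.map] at h1 h2
  exact Prod.ext (he h1) (he h2)

lemma card_tr {e : Fin m → Fin n} (he : Function.Injective e) (A : Finset (Fin m × Fin m)) :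
    (tr e A).card = A.card :=
  Finset.card_image_of_injective _ (prodmap_inj he)

lemma mem_tr {e : Fin m → Fin n} {A : Finset (Fin m × Fin m)} {q : Fin n × Fin n} :
    q ∈ tr e A ↔ ∃ p ∈ A, (e p.1, e p.2) = q := by
  simp [tr, Prod.map, Prod.ext_iff]

lemma mem_tr' {e : Fin m → Fin n} {A : Finset (Fin m × Fin m)} {p : Fin m × Fin m}
    (hp : p ∈ A) : (e p.1, e p.2) ∈ tr e A :=
  mem_tr.mpr ⟨p, hp, rfl⟩

lemma matching_tr_iff {e : Fin m → Fin n} (he : StrictMono e) {A : Finset (Fin m × Fin m)} :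
    IsMatchingArcs n (tr e A) ↔ IsMatchingArcs m A := by
  have hinj := he.injective
  constructor
  · rintro ⟨h1, h2⟩
    constructor
    · intro p hp
      have := h1 _ (mem_tr' hp)
      exact he.lt_iff_lt.mp this
    · intro p hp q hq hne
      have hne' : (e p.1, e p.2) ≠ (e q.1, e q.2) := by
        intro hcontra
        apply hne
        rw [Prod.ext_iff] at hcontra
        exact Prod.ext (hinj hcontra.1) (hinj hcontra.2)
      have := h2 _ (mem_tr' hp) _ (mem_tr' hq) hne'
      refine ⟨?_, ?_, ?_, ?_⟩ <;> intro hcontra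
      · exact this.1 (congrArg e hcontra)
      · exact this.2.1 (congrArg e hcontra)
      · exact this.2.2.1 (congrArg e hcontra)
      · exact this.2.2.2 (congrArg e hcontra)
  · rintro ⟨h1, h2⟩
    constructor
    · intro p' hp'
      obtain ⟨p, hp, rfl⟩ := mem_tr.mp hp'
      exact he (h1 _ hp)
    · intro p' hp' q' hq' hne
      obtain ⟨p, hp, rfl⟩ := mem_tr.mp hp'
      obtain ⟨q, hq, rfl⟩ := mem_tr.mp hq'
      have hne' : p ≠ q := by rintro rfl; exact hne rfl
      have := h2 _ hp _ hq hne'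
      refine ⟨?_, ?_, ?_, ?_⟩ <;> intro hcontra <;> simp only at hcontra
      · exact this.1 (hinj hcontra)
      · exact this.2.1 (hinj hcontra)
      · exact this.2.2.1 (hinj hcontra)
      · exact this.2.2.2 (hinj hcontra)

lemma crossing_tr_iff {e : Fin m → Fin n} (he : StrictMono e) {A : Finset (Fin m × Fin m)} :
    HasKCrossing k n (tr e A) ↔ HasKCrossing k m A := by
  constructor
  · rintro ⟨f, hf1, hf2, hf3, hf4⟩
    choose g hg hge using fun i => mem_tr.mp (hf1 i)
    refine ⟨g, hg, ?_, ?_, ?_⟩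
    · intro i j hij
      have this : (f i).1 < (f j).1 := hf2 hij
      rw [← hge i, ← hge j] at this
      exact he.lt_iff_lt.mp this
    · intro i j hij
      have this : (f i).2 < (f j).2 := hf3 hij
      rw [← hge i, ← hge j] at this
      exact he.lt_iff_lt.mp this
    · intro i j
      have this : (f i).1 < (f j).2 := hf4 i j
      rw [← hge i, ← hge j] at this
      exact he.lt_iff_lt.mp this
  · rintro ⟨f, hf1, hf2, hf3, hf4⟩
    refine ⟨fun i => (e (f i).1, e (f i).2), fun i => mem_tr' (hf1 i), ?_, ?_, ?_⟩
    · intro i j hij; exact he (hf2 hij)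
    · intro i j hij; exact he (hf3 hij)
    · intro i j; exact he (hf4 i j)

lemma knc_tr_iff {e : Fin m → Fin n} (he : StrictMono e) {A : Finset (Fin m × Fin m)} :
    IsKNCDigraph k n (tr e A) ↔ IsKNCDigraph k m A := by
  unfold IsKNCDigraph
  rw [matching_tr_iff he, crossing_tr_iff he]

end NCAux
namespace NCAux

variable {k m n : ℕ}

/-- The set of covered (non-isolated) vertices. -/
noncomputable def cov (A : Finset (Fin n × Fin n)) : Finset (Fin n) :=
  univ.filter fun v => ∃ p ∈ A, p.1 = v ∨ p.2 = v

lemma mem_cov {A : Finset (Fin n × Fin n)} {v : Fin n} :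
    v ∈ cov A ↔ ∃ p ∈ A, p.1 = v ∨ p.2 = v := by simp [cov]

lemma fst_mem_cov {A : Finset (Fin n × Fin n)} {p : Fin n × Fin n} (hp : p ∈ A) :
    p.1 ∈ cov A := mem_cov.mpr ⟨p, hp, Or.inl rfl⟩

lemma snd_mem_cov {A : Finset (Fin n × Fin n)} {p : Fin n × Fin n} (hp : p ∈ A) :
    p.2 ∈ cov A := mem_cov.mpr ⟨p, hp, Or.inr rfl⟩

lemma isolated_eq_compl_cov (A : Finset (Fin n × Fin n)) :
    IsolatedSet n A = univ \ cov A := by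
  ext v
  simp only [IsolatedSet, cov, mem_filter, mem_univ, true_and, mem_sdiff]
  constructor
  · rintro h ⟨p, hp, hor⟩
    rcases hor with h1 | h1
    · exact (h p hp).1 h1
    · exact (h p hp).2 h1
  · intro h p hp
    constructor <;> intro hc <;> exact h ⟨p, hp, by tauto⟩

lemma cov_eq_biUnion (A : Finset (Fin n × Fin n)) :
    cov A = A.biUnion fun p => {p.1, p.2} := by
  ext v
  simp only [mem_cov, mem_biUnion, mem_insert, mem_singleton]
  constructor
  · rintro ⟨p, hp, hor⟩; exact ⟨p, hp, by tauto⟩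
  · rintro ⟨p, hp, hor⟩; exact ⟨p, hp, by tauto⟩

lemma card_cov {A : Finset (Fin n × Fin n)} (hA : IsMatchingArcs n A) :
    (cov A).card = 2 * A.card := by
  rw [cov_eq_biUnion, card_biUnion]
  · rw [Finset.sum_congr rfl (fun p hp => ?_), Finset.sum_const, smul_eq_mul, mul_comm]
    · exact Finset.card_pair (ne_of_lt (hA.1 p hp))
  · intro p hp q hq hne
    have h := hA.2 p hp q hq hne
    show Disjoint _ _
    rw [Finset.disjoint_left]
    intro a ha hb
    simp only [mem_insert, mem_singleton] at ha hb
    rcases ha with rfl | rfl <;> rcases hb with h1 | h1 <;> tauto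

lemma card_isolated {A : Finset (Fin n × Fin n)} (hA : IsMatchingArcs n A) :
    (IsolatedSet n A).card = n - 2 * A.card := by
  rw [isolated_eq_compl_cov, card_sdiff_of_subset (subset_univ _), card_univ, Fintype.card_fin,
    card_cov hA]

lemma cov_tr {e : Fin m → Fin n} (he : Function.Injective e) (A : Finset (Fin m × Fin m)) :
    cov (tr e A) = (cov A).image e := by
  ext v
  simp only [mem_cov, mem_image]
  constructor
  · rintro ⟨p', hp', hor⟩
    obtain ⟨p, hp, rfl⟩ := mem_tr.mp hp'
    rcases hor with h1 | h1
    · exact ⟨p.1, ⟨p, hp, Or.inl rfl⟩, h1⟩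
    · exact ⟨p.2, ⟨p, hp, Or.inr rfl⟩, h1⟩
  · rintro ⟨w, hw, rfl⟩
    obtain ⟨p, hp, hor⟩ := hw
    rcases hor with rfl | rfl
    · exact ⟨(e p.1, e p.2), mem_tr' hp, Or.inl rfl⟩
    · exact ⟨(e p.1, e p.2), mem_tr' hp, Or.inr rfl⟩

lemma natCard_subtype {α} [Fintype α] (p : α → Prop) :
    Nat.card {x // p x} = (Finset.univ.filter p).card := by
  rw [Nat.card_eq_fintype_card, Fintype.card_subtype]

lemma fNC_perfect (k r : ℕ) :
    fNC k (2 * r) 0 =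
      (univ.filter fun A : Finset (Fin (2 * r) × Fin (2 * r)) =>
        IsKNCDigraph k (2 * r) A ∧ A.card = r).card := by
  rw [fNC, natCard_subtype]
  apply Finset.card_bij (fun A _ => A)
  · intro A hA
    simp only [mem_filter, mem_univ, true_and] at hA ⊢
    obtain ⟨h1, h2⟩ := hA
    refine ⟨h1, ?_⟩
    have hc := card_isolated h1.1
    have hcov : (cov A).card ≤ 2 * r := by
      calc (cov A).card ≤ (univ : Finset (Fin (2*r))).card := card_le_card (subset_univ _)
        _ = 2 * r := by rw [card_univ, Fintype.card_fin]
    rw [card_cov h1.1] at hcov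
    omega
  · intro A hA B hB hAB; exact hAB
  · intro A hA
    refine ⟨A, ?_, rfl⟩
    simp only [mem_filter, mem_univ, true_and] at hA ⊢
    obtain ⟨h1, h2⟩ := hA
    refine ⟨h1, ?_⟩
    rw [card_isolated h1.1]
    omega

end NCAux
namespace NCAux

variable {k m n : ℕ}

/-- The increasing enumeration of a `c`-element subset of `Fin n`. -/
noncomputable def emb (V : Finset (Fin n)) {c : ℕ} (hV : V.card = c) : Fin c → Fin n :=
  fun i => ((V.orderIsoOfFin hV) i : Fin n)

lemma emb_strictMono (V : Finset (Fin n)) {c : ℕ} (hV : V.card = c) :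
    StrictMono (emb V hV) := fun i j hij => by
  have := (V.orderIsoOfFin hV).strictMono hij
  exact this

lemma emb_mem (V : Finset (Fin n)) {c : ℕ} (hV : V.card = c) (i : Fin c) :
    emb V hV i ∈ V := ((V.orderIsoOfFin hV) i).2

lemma emb_surj (V : Finset (Fin n)) {c : ℕ} (hV : V.card = c) {x : Fin n} (hx : x ∈ V) :
    ∃ i, emb V hV i = x := by
  refine ⟨(V.orderIsoOfFin hV).symm ⟨x, hx⟩, ?_⟩
  simp [emb]

lemma emb_image_univ (V : Finset (Fin n)) {c : ℕ} (hV : V.card = c) :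
    univ.image (emb V hV) = V := by
  ext x
  simp only [mem_image, mem_univ, true_and]
  constructor
  · rintro ⟨i, rfl⟩; exact emb_mem V hV i
  · exact emb_surj V hV

lemma exists_tr_eq {V : Finset (Fin n)} {c : ℕ} (hV : V.card = c)
    {A : Finset (Fin n × Fin n)} (hcov : cov A ⊆ V) :
    ∃ M : Finset (Fin c × Fin c), tr (emb V hV) M = A := by
  classical
  rcases Nat.eq_zero_or_pos c with hc | hc
  · subst hc
    have hA : A = ∅ := by
      rw [Finset.eq_empty_iff_forall_notMem]
      intro p hp
      have := hcov (fst_mem_cov hp)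
      rw [Finset.card_eq_zero.mp hV] at this
      exact absurd this (Finset.notMem_empty _)
    exact ⟨∅, by simp [tr, hA]⟩
  haveI : Nonempty (Fin c) := ⟨⟨0, hc⟩⟩
  set e := emb V hV with he
  have hinj : Function.Injective e := (emb_strictMono V hV).injective
  have hrange : ∀ x ∈ V, e (Function.invFun e x) = x := by
    intro x hx
    obtain ⟨i, hi⟩ := emb_surj V hV hx
    exact Function.invFun_eq ⟨i, hi⟩
  refine ⟨A.image (Prod.map (Function.invFun e) (Function.invFun e)), ?_⟩
  rw [tr, Finset.image_image]
  rw [show ((Prod.map e e) ∘ (Prod.map (Function.invFun e) (Function.invFun e)))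
      = Prod.map (e ∘ Function.invFun e) (e ∘ Function.invFun e) by
    funext p; simp [Prod.map]]
  have : ∀ p ∈ A, Prod.map (e ∘ Function.invFun e) (e ∘ Function.invFun e) p = id p := by
    intro p hp
    have h1 : p.1 ∈ V := hcov (fst_mem_cov hp)
    have h2 : p.2 ∈ V := hcov (snd_mem_cov hp)
    simp [Prod.map, hrange _ h1, hrange _ h2, Prod.ext_iff]
  rw [Finset.image_congr this, Finset.image_id]

lemma fiber_card (k m r : ℕ) {V : Finset (Fin m)} (hV : V.card = 2 * r) :
    ((univ.filter fun A : Finset (Fin m × Fin m) =>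
        IsKNCDigraph k m A ∧ A.card = r).filter fun A => cov A = V).card
      = (univ.filter fun M : Finset (Fin (2 * r) × Fin (2 * r)) =>
          IsKNCDigraph k (2 * r) M ∧ M.card = r).card := by
  set e := emb V hV with he
  have hsm : StrictMono e := emb_strictMono V hV
  symm
  apply Finset.card_bij (fun M _ => tr e M)
  · intro M hM
    simp only [mem_filter, mem_univ, true_and] at hM ⊢
    obtain ⟨h1, h2⟩ := hM
    have hcovM : cov M = univ := by
      apply Finset.eq_univ_of_card
      rw [card_cov h1.1, h2, Fintype.card_fin]
    refine ⟨⟨(knc_tr_iff hsm).mpr h1, by rw [card_tr hsm.injective, h2]⟩, ?_⟩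
    rw [cov_tr hsm.injective, hcovM, emb_image_univ]
  · intro M₁ h₁ M₂ h₂ hMM
    exact Finset.image_injective (prodmap_inj hsm.injective) hMM
  · intro A hA
    simp only [mem_filter, mem_univ, true_and] at hA
    obtain ⟨⟨h1, h2⟩, h3⟩ := hA
    obtain ⟨M, hM⟩ := exists_tr_eq hV (by rw [h3])
    refine ⟨M, ?_, hM⟩
    simp only [mem_filter, mem_univ, true_and]
    constructor
    · rw [← knc_tr_iff hsm, hM]; exact h1
    · have := card_tr hsm.injective M
      rw [hM] at this
      omega

lemma count_by_support (k m r : ℕ) :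
    (univ.filter fun A : Finset (Fin m × Fin m) =>
        IsKNCDigraph k m A ∧ A.card = r).card
      = m.choose (2 * r) * fNC k (2 * r) 0 := by
  rw [fNC_perfect]
  rw [Finset.card_eq_sum_card_fiberwise (f := cov)
    (t := powersetCard (2 * r) (univ : Finset (Fin m))) ?_]
  · rw [Finset.sum_congr rfl (fun V hV => ?_), Finset.sum_const, smul_eq_mul,
      card_powersetCard, card_univ, Fintype.card_fin]
    rw [mem_powersetCard] at hV
    exact fiber_card k m r hV.2
  · intro A hA
    simp only [Finset.mem_coe, mem_filter, mem_univ, true_and] at hA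
    rw [Finset.mem_coe, mem_powersetCard]
    exact ⟨subset_univ _, by rw [card_cov hA.1.1, hA.2]⟩

end NCAux
namespace NCAux

variable {k m n : ℕ}

noncomputable def oneArcs (A : Finset (Fin n × Fin n)) : Finset (Fin n × Fin n) :=
  A.filter fun p => (p.2 : ℕ) = (p.1 : ℕ) + 1

lemma hasOneArc_iff {A : Finset (Fin n × Fin n)} :
    HasOneArc n A ↔ (oneArcs A).Nonempty := by
  simp [HasOneArc, oneArcs, Finset.Nonempty]

lemma matching_subset {A B : Finset (Fin n × Fin n)} (hAB : A ⊆ B)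
    (hB : IsMatchingArcs n B) : IsMatchingArcs n A :=
  ⟨fun p hp => hB.1 p (hAB hp), fun p hp q hq hne => hB.2 p (hAB hp) q (hAB hq) hne⟩

lemma crossing_mono {A B : Finset (Fin n × Fin n)} (hAB : A ⊆ B)
    (h : HasKCrossing k n A) : HasKCrossing k n B := by
  obtain ⟨f, h1, h2, h3, h4⟩ := h
  exact ⟨f, fun i => hAB (h1 i), h2, h3, h4⟩

/-- A `1`-arc can never belong to a family of (at least two) mutually crossing arcs. -/
lemma crossing_union_oneArcs (hk : 2 ≤ k) {A T : Finset (Fin n × Fin n)}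
    (hT : ∀ p ∈ T, (p.2 : ℕ) = (p.1 : ℕ) + 1)
    (h : HasKCrossing k n (A ∪ T)) : HasKCrossing k n A := by
  obtain ⟨f, h1, h2, h3, h4⟩ := h
  refine ⟨f, fun i => ?_, h2, h3, h4⟩
  rcases Finset.mem_union.mp (h1 i) with hi | hi
  · exact hi
  exfalso
  have hone : ((f i).2 : ℕ) = ((f i).1 : ℕ) + 1 := hT _ hi
  have h0 : (0 : ℕ) < k := by omega
  have h1' : (1 : ℕ) < k := by omega
  set i' : Fin k := if i = ⟨0, h0⟩ then ⟨1, h1'⟩ else ⟨0, h0⟩ with hi'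
  have hne : i ≠ i' := by
    by_cases hcase : i = ⟨0, h0⟩
    · rw [hi', if_pos hcase, hcase]
      intro hcon
      exact absurd (congrArg Fin.val hcon) (by simp)
    · rw [hi', if_neg hcase]
      exact hcase
  rcases lt_or_gt_of_ne hne with hlt | hgt
  · have ha : (f i).1 < (f i').1 := h2 hlt
    have hb : (f i').1 < (f i).2 := h4 i' i
    have := Fin.lt_iff_val_lt_val.mp ha
    have := Fin.lt_iff_val_lt_val.mp hb
    omega
  · have ha : (f i').2 < (f i).2 := h3 hgt
    have hb : (f i).1 < (f i').2 := h4 i i'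
    have := Fin.lt_iff_val_lt_val.mp ha
    have := Fin.lt_iff_val_lt_val.mp hb
    omega

lemma matching_union {A T : Finset (Fin n × Fin n)} (hA : IsMatchingArcs n A)
    (hT : IsMatchingArcs n T) (hdisj : Disjoint (cov A) (cov T)) :
    IsMatchingArcs n (A ∪ T) := by
  constructor
  · intro p hp
    rcases Finset.mem_union.mp hp with hp | hp
    · exact hA.1 p hp
    · exact hT.1 p hp
  · intro p hp q hq hne
    have key : ∀ r s : Fin n × Fin n, r ∈ A → s ∈ T →
        r.1 ≠ s.1 ∧ r.1 ≠ s.2 ∧ r.2 ≠ s.1 ∧ r.2 ≠ s.2 := by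
      intro r s hr hs
      have hr1 := fst_mem_cov hr
      have hr2 := snd_mem_cov hr
      have hs1 := fst_mem_cov hs
      have hs2 := snd_mem_cov hs
      refine ⟨?_, ?_, ?_, ?_⟩ <;> intro heq
      · exact Finset.disjoint_left.mp hdisj hr1 (heq ▸ hs1)
      · exact Finset.disjoint_left.mp hdisj hr1 (heq ▸ hs2)
      · exact Finset.disjoint_left.mp hdisj hr2 (heq ▸ hs1)
      · exact Finset.disjoint_left.mp hdisj hr2 (heq ▸ hs2)
    rcases Finset.mem_union.mp hp with hp' | hp' <;>
      rcases Finset.mem_union.mp hq with hq' | hq'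
    · exact hA.2 p hp' q hq' hne
    · exact key p q hp' hq'
    · have := key q p hq' hp'
      tauto
    · exact hT.2 p hp' q hq' hne

end NCAux
namespace NCAux

variable {k m n : ℕ}

/-- A set of pairwise disjoint `1`-arcs (a domino placement). -/
def IsDomino (n : ℕ) (T : Finset (Fin n × Fin n)) : Prop :=
  IsMatchingArcs n T ∧ ∀ p ∈ T, (p.2 : ℕ) = (p.1 : ℕ) + 1

lemma domino_fiber (hk : 2 ≤ k) {T : Finset (Fin n × Fin n)} (hT : IsDomino n T)
    {j h : ℕ} (hTj : T.card = j) (hjh : j ≤ h) :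
    (univ.filter fun A : Finset (Fin n × Fin n) =>
        (IsKNCDigraph k n A ∧ A.card = h) ∧ T ⊆ A).card
      = (univ.filter fun B : Finset (Fin (n - 2 * j) × Fin (n - 2 * j)) =>
          IsKNCDigraph k (n - 2 * j) B ∧ B.card = h - j).card := by
  set C : Finset (Fin n) := univ \ cov T with hCdef
  have hC : C.card = n - 2 * j := by
    rw [hCdef, card_sdiff_of_subset (subset_univ _), card_univ, Fintype.card_fin, card_cov hT.1, hTj]
  set e := emb C hC with he
  have hsm : StrictMono e := emb_strictMono C hC
  have hcovtr : ∀ B : Finset (Fin (n - 2 * j) × Fin (n - 2 * j)), cov (tr e B) ⊆ C := by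
    intro B
    rw [cov_tr hsm.injective]
    intro x hx
    obtain ⟨w, _, rfl⟩ := Finset.mem_image.mp hx
    exact emb_mem C hC w
  have hdisjcov : ∀ B : Finset (Fin (n - 2 * j) × Fin (n - 2 * j)),
      Disjoint (cov (tr e B)) (cov T) := by
    intro B
    exact Finset.disjoint_left.mpr fun x hx hx' =>
      (Finset.mem_sdiff.mp (hcovtr B hx)).2 hx'
  have hdisj : ∀ B : Finset (Fin (n - 2 * j) × Fin (n - 2 * j)), Disjoint (tr e B) T := by
    intro B
    rw [Finset.disjoint_left]
    intro p hp hp'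
    exact Finset.disjoint_left.mp (hdisjcov B) (fst_mem_cov hp) (fst_mem_cov hp')
  symm
  apply Finset.card_bij (fun B _ => tr e B ∪ T)
  · intro B hB
    simp only [mem_filter, mem_univ, true_and] at hB ⊢
    obtain ⟨h1, h2⟩ := hB
    have hm : IsMatchingArcs n (tr e B ∪ T) :=
      matching_union ((matching_tr_iff hsm).mpr h1.1) hT.1 (hdisjcov B)
    refine ⟨⟨⟨hm, ?_⟩, ?_⟩, Finset.subset_union_right⟩
    · intro hcr
      exact h1.2 ((crossing_tr_iff hsm).mp (crossing_union_oneArcs hk hT.2 hcr))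
    · rw [Finset.card_union_of_disjoint (hdisj B), card_tr hsm.injective, h2, hTj]
      omega
  · intro B₁ hB₁ B₂ hB₂ hEq
    have : tr e B₁ = tr e B₂ := by
      have e1 := Finset.union_sdiff_cancel_right (hdisj B₁)
      have e2 := Finset.union_sdiff_cancel_right (hdisj B₂)
      rw [← e1, ← e2, hEq]
    exact Finset.image_injective (prodmap_inj hsm.injective) this
  · intro A hA
    simp only [mem_filter, mem_univ, true_and] at hA
    obtain ⟨⟨hknc, hcard⟩, hTA⟩ := hA
    have hA'cov : cov (A \ T) ⊆ C := by
      intro x hx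
      rw [hCdef, Finset.mem_sdiff]
      refine ⟨mem_univ _, fun hx' => ?_⟩
      obtain ⟨p, hp, hpor⟩ := mem_cov.mp hx
      obtain ⟨q, hq, hqor⟩ := mem_cov.mp hx'
      have hpA : p ∈ A := (Finset.mem_sdiff.mp hp).1
      have hpT : p ∉ T := (Finset.mem_sdiff.mp hp).2
      have hqA : q ∈ A := hTA hq
      have hpq : p ≠ q := fun hcon => hpT (hcon ▸ hq)
      have := hknc.1.2 p hpA q hqA hpq
      rcases hpor with rfl | rfl <;> rcases hqor with h' | h' <;> tauto
    obtain ⟨B, hB⟩ := exists_tr_eq hC hA'cov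
    have hcardB : B.card = h - j := by
      have := card_tr hsm.injective B
      rw [hB] at this
      rw [← this, card_sdiff_of_subset hTA, hcard, hTj]
    refine ⟨B, ?_, ?_⟩
    · simp only [mem_filter, mem_univ, true_and]
      refine ⟨?_, hcardB⟩
      rw [← knc_tr_iff hsm, hB]
      refine ⟨matching_subset (Finset.sdiff_subset) hknc.1, fun hcr => ?_⟩
      exact hknc.2 (crossing_mono (Finset.sdiff_subset) hcr)
    · rw [hB, Finset.sdiff_union_of_subset hTA]

end NCAux
namespace NCAux

/-- gap condition for `1`-arc left endpoints -/
def Gap (S : Finset ℕ) : Prop :=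
  ∀ a ∈ S, ∀ b ∈ S, a ≠ b → a + 2 ≤ b ∨ b + 2 ≤ a

lemma pascal_aux (m' j : ℕ) :
    (m' + 1 - j).choose (j + 1) = (m' - j).choose (j + 1) + (m' - 1 + 1 - j).choose j := by
  rcases Nat.lt_or_ge j m' with H | H
  · obtain ⟨s, hs⟩ : ∃ s, m' - j = s + 1 := ⟨m' - j - 1, by omega⟩
    rw [show m' + 1 - j = s + 1 + 1 by omega, show m' - 1 + 1 - j = s + 1 by omega, hs,
      Nat.choose_succ_succ (s + 1) j]
    exact Nat.add_comm _ _
  · rcases Nat.eq_zero_or_pos j with rfl | hj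
    · have hm : m' = 0 := by omega
      subst hm; simp
    · have e1 : (m' + 1 - j).choose (j + 1) = 0 :=
        Nat.choose_eq_zero_of_lt (by omega)
      have e2 : (m' - j).choose (j + 1) = 0 :=
        Nat.choose_eq_zero_of_lt (by omega)
      have e3 : (m' - 1 + 1 - j).choose j = 0 :=
        Nat.choose_eq_zero_of_lt (by omega)
      rw [e1, e2, e3]

lemma gapcount (m : ℕ) :
    ∀ j, (((Finset.range m).powersetCard j).filter Gap).card = (m + 1 - j).choose j := by
  induction m using Nat.strong_induction_on with
  | _ m ih =>
  intro j
  match j with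
  | 0 =>
    rw [Finset.powersetCard_zero]
    have : ({∅} : Finset (Finset ℕ)).filter Gap = {∅} := by
      rw [Finset.filter_singleton, if_pos]
      intro a ha; exact absurd ha (Finset.notMem_empty _)
    rw [this]
    simp
  | (j + 1) =>
    match m with
    | 0 =>
      have h0 : ((Finset.range 0).powersetCard (j + 1)) = ∅ := by
        rw [Finset.eq_empty_iff_forall_notMem]
        intro S hS
        rw [Finset.mem_powersetCard] at hS
        have := Finset.card_le_card hS.1
        simp [hS.2] at this
      rw [h0]
      simp [Nat.choose_eq_zero_of_lt]
    | (m' + 1) =>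
      set F := ((Finset.range (m' + 1)).powersetCard (j + 1)).filter Gap with hF
      have hsplit := Finset.card_filter_add_card_filter_not
        (s := F) (p := fun S => m' ∈ S)
      have hA : F.filter (fun S => ¬ m' ∈ S) = ((Finset.range m').powersetCard (j + 1)).filter Gap := by
        ext S
        simp only [hF, Finset.mem_filter, Finset.mem_powersetCard]
        constructor
        · rintro ⟨⟨⟨hsub, hcard⟩, hgap⟩, hnm⟩
          refine ⟨⟨fun a ha => ?_, hcard⟩, hgap⟩
          have := hsub ha
          rw [Finset.mem_range] at this ⊢
          rcases Nat.lt_succ_iff_lt_or_eq.mp this with h | rfl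
          · exact h
          · exact absurd ha hnm
        · rintro ⟨⟨hsub, hcard⟩, hgap⟩
          refine ⟨⟨⟨fun a ha => ?_, hcard⟩, hgap⟩, fun hm => ?_⟩
          · have := hsub ha
            rw [Finset.mem_range] at this ⊢
            omega
          · have := hsub hm
            rw [Finset.mem_range] at this
            omega
      have hB : (F.filter (fun S => m' ∈ S)).card
          = (((Finset.range (m' - 1)).powersetCard j).filter Gap).card := by
        apply Finset.card_bij (fun S _ => S.erase m')
        · intro S hS
          simp only [hF, Finset.mem_filter, Finset.mem_powersetCard] at hS ⊢
          obtain ⟨⟨⟨hsub, hcard⟩, hgap⟩, hm⟩ := hS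
          refine ⟨⟨fun a ha => ?_, ?_⟩, fun a ha b hb hab => ?_⟩
          · rw [Finset.mem_erase] at ha
            obtain ⟨hane, haS⟩ := ha
            have h1 := hsub haS; rw [Finset.mem_range] at h1
            have h2 := hgap a haS m' hm hane
            rw [Finset.mem_range]
            omega
          · rw [Finset.card_erase_of_mem hm, hcard]
            omega
          · exact hgap a (Finset.mem_of_mem_erase ha) b (Finset.mem_of_mem_erase hb) hab
        · intro S₁ h₁ S₂ h₂ heq
          simp only [hF, Finset.mem_filter] at h₁ h₂
          have e1 : insert m' (S₁.erase m') = S₁ := Finset.insert_erase h₁.2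
          have e2 : insert m' (S₂.erase m') = S₂ := Finset.insert_erase h₂.2
          rw [← e1, ← e2, heq]
        · intro S' hS'
          simp only [Finset.mem_filter, Finset.mem_powersetCard] at hS'
          obtain ⟨⟨hsub, hcard⟩, hgap⟩ := hS'
          have hno : m' ∉ S' := fun hm => by
            have := hsub hm; rw [Finset.mem_range] at this; omega
          refine ⟨insert m' S', ?_, ?_⟩
          · simp only [hF, Finset.mem_filter, Finset.mem_powersetCard]
            refine ⟨⟨⟨fun a ha => ?_, ?_⟩, ?_⟩, Finset.mem_insert_self _ _⟩
            · rw [Finset.mem_insert] at ha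
              rw [Finset.mem_range]
              rcases ha with rfl | ha
              · omega
              · have := hsub ha; rw [Finset.mem_range] at this; omega
            · rw [Finset.card_insert_of_notMem hno, hcard]
            · intro a ha b hb hab
              rw [Finset.mem_insert] at ha hb
              rcases ha with rfl | ha <;> rcases hb with rfl | hb
              · exact absurd rfl hab
              · have := hsub hb; rw [Finset.mem_range] at this; omega
              · have := hsub ha; rw [Finset.mem_range] at this; omega
              · exact hgap a ha b hb hab
          · rw [Finset.erase_insert hno]
      rw [← hsplit, hA, hB, ih m' (by omega) (j + 1), ih (m' - 1) (by omega) j,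
        show m' + 1 + 1 - (j + 1) = m' + 1 - j by omega,
        show m' + 1 - (j + 1) = m' - j by omega]
      rw [Nat.add_comm]
      exact (pascal_aux m' j).symm

end NCAux
namespace NCAux

variable {n : ℕ}

lemma domino_sub {T₁ T₂ : Finset (Fin n × Fin n)} (h₁ : IsDomino n T₁) (h₂ : IsDomino n T₂)
    (him : T₁.image (fun p => (p.1 : ℕ)) ⊆ T₂.image (fun p => (p.1 : ℕ))) : T₁ ⊆ T₂ := by
  intro p hp
  have : (p.1 : ℕ) ∈ T₂.image (fun p => (p.1 : ℕ)) :=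
    him (Finset.mem_image_of_mem _ hp)
  obtain ⟨q, hq, hqp⟩ := Finset.mem_image.mp this
  have h1 : p.1 = q.1 := Fin.val_injective hqp.symm
  have h2 : p.2 = q.2 := by
    apply Fin.val_injective
    rw [h₁.2 p hp, h₂.2 q hq, hqp]
  have : p = q := Prod.ext h1 h2
  rw [this]; exact hq

lemma domino_count (n j : ℕ) :
    (univ.filter fun T : Finset (Fin n × Fin n) => IsDomino n T ∧ T.card = j).card
      = (n - j).choose j := by
  have key : (univ.filter fun T : Finset (Fin n × Fin n) => IsDomino n T ∧ T.card = j).card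
      = (((Finset.range (n - 1)).powersetCard j).filter Gap).card := by
    apply Finset.card_bij (fun T _ => T.image fun p => ((p.1 : ℕ)))
    · intro T hT
      simp only [Finset.mem_filter, Finset.mem_univ, true_and] at hT
      obtain ⟨⟨hm, hone⟩, hcard⟩ := hT
      have hinj : ∀ p ∈ T, ∀ q ∈ T, (p.1 : ℕ) = (q.1 : ℕ) → p = q := by
        intro p hp q hq hpq
        by_contra hne
        exact (hm.2 p hp q hq hne).1 (Fin.val_injective hpq)
      rw [Finset.mem_filter, Finset.mem_powersetCard]
      refine ⟨⟨fun a ha => ?_, ?_⟩, fun a ha b hb hab => ?_⟩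
      · obtain ⟨p, hp, rfl⟩ := Finset.mem_image.mp ha
        have h1 := hone p hp
        have h2 : ((p.2 : ℕ)) < n := p.2.2
        rw [Finset.mem_range]
        omega
      · rw [Finset.card_image_of_injOn (fun p hp q hq => hinj p hp q hq), hcard]
      · obtain ⟨p, hp, rfl⟩ := Finset.mem_image.mp ha
        obtain ⟨q, hq, rfl⟩ := Finset.mem_image.mp hb
        have hne : p ≠ q := fun hcon => hab (by rw [hcon])
        have hi := hm.2 p hp q hq hne
        have e1 : (p.1 : ℕ) ≠ (q.1 : ℕ) := fun hcon => hi.1 (Fin.val_injective hcon)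
        have e2 : (p.1 : ℕ) ≠ (q.2 : ℕ) := fun hcon => hi.2.1 (Fin.val_injective hcon)
        have e3 : (p.2 : ℕ) ≠ (q.1 : ℕ) := fun hcon => hi.2.2.1 (Fin.val_injective hcon)
        have f1 := hone p hp
        have f2 := hone q hq
        omega
    · intro T₁ h₁ T₂ h₂ heq
      simp only [Finset.mem_filter, Finset.mem_univ, true_and] at h₁ h₂
      exact Finset.Subset.antisymm
        (domino_sub h₁.1 h₂.1 (le_of_eq heq))
        (domino_sub h₂.1 h₁.1 (le_of_eq heq.symm))
    · intro S hS
      rw [Finset.mem_filter, Finset.mem_powersetCard] at hS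
      obtain ⟨⟨hsub, hcard⟩, hgap⟩ := hS
      have hS' : ∀ a ∈ S, a < n - 1 := fun a ha => Finset.mem_range.mp (hsub ha)
      set F : {a // a ∈ S} → Fin n × Fin n := fun a =>
        ((⟨a.1, by have := hS' a.1 a.2; omega⟩ : Fin n),
         (⟨a.1 + 1, by have := hS' a.1 a.2; omega⟩ : Fin n)) with hF
      have hFinj : Function.Injective F := by
        intro a b hab
        have : a.1 = b.1 := congrArg (fun p => (p.1 : ℕ)) hab
        exact Subtype.ext this
      refine ⟨S.attach.image F, ?_, ?_⟩
      · simp only [Finset.mem_filter, Finset.mem_univ, true_and]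
        have hmemT : ∀ p ∈ S.attach.image F, ∃ a : {a // a ∈ S}, F a = p := by
          intro p hp
          obtain ⟨a, _, ha⟩ := Finset.mem_image.mp hp
          exact ⟨a, ha⟩
        refine ⟨⟨⟨?_, ?_⟩, ?_⟩, ?_⟩
        · intro p hp
          obtain ⟨a, rfl⟩ := hmemT p hp
          exact Fin.mk_lt_mk.mpr (by omega)
        · intro p hp q hq hne
          obtain ⟨a, rfl⟩ := hmemT p hp
          obtain ⟨b, rfl⟩ := hmemT q hq
          have hab : a.1 ≠ b.1 := fun hcon => hne (by rw [Subtype.ext hcon])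
          have := hgap a.1 a.2 b.1 b.2 hab
          refine ⟨?_, ?_, ?_, ?_⟩ <;> exact Fin.ne_of_val_ne (by simp [hF]; first | omega | exact fun h => hab (congrArg Subtype.val h))
        · intro p hp
          obtain ⟨a, rfl⟩ := hmemT p hp
          rfl
        · rw [Finset.card_image_of_injective _ hFinj, Finset.card_attach, hcard]
      · rw [Finset.image_image]
        have : ((fun p : Fin n × Fin n => (p.1 : ℕ)) ∘ F) = fun a : {a // a ∈ S} => (a : ℕ) := rfl
        rw [this]
        exact Finset.attach_image_val
  rw [key, gapcount]
  rcases n with _ | n'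
  · rcases j with _ | j' <;> simp
  · rw [show n' + 1 - 1 + 1 - j = n' + 1 - j by omega]

end NCAux
namespace NCAux

variable {k n h : ℕ}

lemma mem_oneArcs {A : Finset (Fin n × Fin n)} {p : Fin n × Fin n} :
    p ∈ oneArcs A ↔ p ∈ A ∧ (p.2 : ℕ) = (p.1 : ℕ) + 1 := by
  simp [oneArcs]

lemma oneArcs_subset (A : Finset (Fin n × Fin n)) : oneArcs A ⊆ A :=
  Finset.filter_subset _ _

lemma pairs_count (hk : 2 ≤ k) {j : ℕ} (hjh : j ≤ h) :
    ∑ A ∈ (univ.filter fun A : Finset (Fin n × Fin n) =>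
        IsKNCDigraph k n A ∧ A.card = h), ((oneArcs A).powersetCard j).card
      = (n - j).choose j * ((n - 2 * j).choose (2 * (h - j)) * fNC k (2 * (h - j)) 0) := by
  set S : Finset (Finset (Fin n × Fin n)) :=
    univ.filter fun A => IsKNCDigraph k n A ∧ A.card = h with hS
  set P : Finset (Finset (Fin n × Fin n) × Finset (Fin n × Fin n)) :=
    univ.filter fun q =>
      (IsKNCDigraph k n q.1 ∧ q.1.card = h) ∧ q.2 ⊆ oneArcs q.1 ∧ q.2.card = j with hP
  set D : Finset (Finset (Fin n × Fin n)) :=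
    univ.filter fun T => IsDomino n T ∧ T.card = j with hD
  have claim1 : P.card = ∑ A ∈ S, ((oneArcs A).powersetCard j).card := by
    rw [Finset.card_eq_sum_card_fiberwise (f := Prod.fst) (t := S) ?_]
    · refine Finset.sum_congr rfl fun A hA => ?_
      apply Finset.card_bij (fun q _ => q.2)
      · intro q hq
        simp only [hP, Finset.mem_filter, Finset.mem_univ, true_and] at hq
        obtain ⟨⟨_, h2⟩, hfst⟩ := hq
        rw [Finset.mem_powersetCard, ← hfst]
        exact h2
      · intro q₁ h₁ q₂ h₂ heq
        simp only [Finset.mem_filter] at h₁ h₂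
        exact Prod.ext (h₁.2.trans h₂.2.symm) heq
      · intro T hT
        rw [Finset.mem_powersetCard] at hT
        simp only [hS, Finset.mem_filter, Finset.mem_univ, true_and] at hA
        refine ⟨(A, T), ?_, rfl⟩
        simp only [hP, Finset.mem_filter, Finset.mem_univ, true_and]
        exact ⟨⟨hA, hT.1, hT.2⟩, trivial⟩
    · intro q hq
      simp only [Finset.mem_coe, hP, Finset.mem_filter, Finset.mem_univ, true_and] at hq
      simp only [Finset.mem_coe, hS, Finset.mem_filter, Finset.mem_univ, true_and]
      exact hq.1
  have claim2 : P.card = ∑ T ∈ D, (S.filter fun A => T ⊆ A).card := by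
    rw [Finset.card_eq_sum_card_fiberwise (f := Prod.snd) (t := D) ?_]
    · refine Finset.sum_congr rfl fun T hT => ?_
      apply Finset.card_bij (fun q _ => q.1)
      · intro q hq
        simp only [hP, Finset.mem_filter, Finset.mem_univ, true_and] at hq
        simp only [hS, Finset.mem_filter, Finset.mem_univ, true_and]
        exact ⟨hq.1.1, hq.2 ▸ (hq.1.2.1.trans (oneArcs_subset _))⟩
      · intro q₁ h₁ q₂ h₂ heq
        simp only [Finset.mem_filter] at h₁ h₂
        exact Prod.ext heq (h₁.2.trans h₂.2.symm)
      · intro A hA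
        simp only [hS, Finset.mem_filter, Finset.mem_univ, true_and] at hA
        simp only [hD, Finset.mem_filter, Finset.mem_univ, true_and] at hT
        refine ⟨(A, T), ?_, rfl⟩
        simp only [hP, Finset.mem_filter, Finset.mem_univ, true_and]
        refine ⟨⟨hA.1, ?_, hT.2⟩, trivial⟩
        intro p hp
        exact mem_oneArcs.mpr ⟨hA.2 hp, hT.1.2 p hp⟩
    · intro q hq
      simp only [Finset.mem_coe, hP, Finset.mem_filter, Finset.mem_univ, true_and] at hq
      simp only [Finset.mem_coe, hD, Finset.mem_filter, Finset.mem_univ, true_and]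
      obtain ⟨⟨hknc, _⟩, hsub, hcard⟩ := hq
      refine ⟨⟨matching_subset (hsub.trans (oneArcs_subset _)) hknc.1, fun p hp => ?_⟩, hcard⟩
      exact (mem_oneArcs.mp (hsub hp)).2
  rw [← claim1, claim2]
  have hfib : ∀ T ∈ D, (S.filter fun A => T ⊆ A).card
      = (n - 2 * j).choose (2 * (h - j)) * fNC k (2 * (h - j)) 0 := by
    intro T hT
    simp only [hD, Finset.mem_filter, Finset.mem_univ, true_and] at hT
    have := domino_fiber (k := k) hk hT.1 hT.2 hjh
    rw [hS, Finset.filter_filter]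
    rw [this, count_by_support]
  rw [Finset.sum_congr rfl hfib, Finset.sum_const, smul_eq_mul]
  congr 1
  rw [hD]
  exact domino_count n j

end NCAux
/-- `S'_k(n,h) = ∑_{j=0}^{h} (−1)^j C(n−j,j) C(n−2j, 2(h−j)) f_k(2(h−j),0)`. -/
theorem stmt5 (k n h : ℕ) (hk : 2 ≤ k) (hh : h ≤ n / 2) :
    (SArc k n h : ℤ) =
      ∑ j ∈ Finset.range (h + 1),
        (-1 : ℤ) ^ j * (Nat.choose (n - j) j : ℤ) *
          (Nat.choose (n - 2 * j) (2 * (h - j)) : ℤ) * (fNC k (2 * (h - j)) 0 : ℤ) := by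
  classical
  set S : Finset (Finset (Fin n × Fin n)) :=
    Finset.univ.filter fun A => IsKNCDigraph k n A ∧ A.card = h with hS
  have hSArc : SArc k n h = (S.filter fun A => NCAux.oneArcs A = ∅).card := by
    rw [SArc, NCAux.natCard_subtype, hS, Finset.filter_filter]
    congr 1
    ext A
    simp only [Finset.mem_filter, Finset.mem_univ, true_and]
    unfold IsRNAStructure
    rw [NCAux.hasOneArc_iff, Finset.not_nonempty_iff_eq_empty]
    tauto
  have step1 : ∀ A ∈ S, (if NCAux.oneArcs A = ∅ then (1 : ℤ) else 0)
      = ∑ j ∈ Finset.range (h + 1),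
          ∑ T ∈ (NCAux.oneArcs A).powersetCard j, (-1 : ℤ) ^ T.card := by
    intro A hA
    rw [← Finset.sum_powerset_neg_one_pow_card]
    have hcard : (NCAux.oneArcs A).card ≤ h := by
      have h1 := Finset.card_le_card (NCAux.oneArcs_subset A)
      simp only [hS, Finset.mem_filter] at hA
      omega
    rw [← Finset.sum_fiberwise_of_maps_to (g := Finset.card)
      (t := Finset.range (h + 1)) (fun T hT => ?_) (fun T => (-1 : ℤ) ^ T.card)]
    · exact Finset.sum_congr rfl fun j _ =>
        Finset.sum_congr (by rw [Finset.powersetCard_eq_filter]) fun _ _ => rfl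
    · rw [Finset.mem_range, Nat.lt_succ_iff]
      exact le_trans (Finset.card_le_card (Finset.mem_powerset.mp hT)) hcard
  have step2 : ∀ (A : Finset (Fin n × Fin n)) (j : ℕ),
      ∑ T ∈ (NCAux.oneArcs A).powersetCard j, (-1 : ℤ) ^ T.card
        = (-1 : ℤ) ^ j * (((NCAux.oneArcs A).powersetCard j).card : ℤ) := by
    intro A j
    have hcc : ∀ T ∈ (NCAux.oneArcs A).powersetCard j,
        (-1 : ℤ) ^ T.card = (-1 : ℤ) ^ j := fun T hT => by
      rw [(Finset.mem_powersetCard.mp hT).2]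
    rw [Finset.sum_congr rfl hcc, Finset.sum_const, nsmul_eq_mul, mul_comm]
  calc (SArc k n h : ℤ)
      = ∑ A ∈ S, if NCAux.oneArcs A = ∅ then (1 : ℤ) else 0 := by
        rw [hSArc, Finset.card_filter]
        push_cast
        rfl
    _ = ∑ A ∈ S, ∑ j ∈ Finset.range (h + 1),
          ∑ T ∈ (NCAux.oneArcs A).powersetCard j, (-1 : ℤ) ^ T.card :=
        Finset.sum_congr rfl step1
    _ = ∑ j ∈ Finset.range (h + 1), ∑ A ∈ S,
          ∑ T ∈ (NCAux.oneArcs A).powersetCard j, (-1 : ℤ) ^ T.card := Finset.sum_comm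
    _ = ∑ j ∈ Finset.range (h + 1),
          (-1 : ℤ) ^ j * ∑ A ∈ S, (((NCAux.oneArcs A).powersetCard j).card : ℤ) := by
        refine Finset.sum_congr rfl fun j _ => ?_
        rw [Finset.mul_sum]
        exact Finset.sum_congr rfl fun A _ => step2 A j
    _ = ∑ j ∈ Finset.range (h + 1),
        (-1 : ℤ) ^ j * (Nat.choose (n - j) j : ℤ) *
          (Nat.choose (n - 2 * j) (2 * (h - j)) : ℤ) * (fNC k (2 * (h - j)) 0 : ℤ) := by
        refine Finset.sum_congr rfl fun j hj => ?_
        have hjh : j ≤ h := Nat.lt_succ_iff.mp (Finset.mem_range.mp hj)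
        have hpc := NCAux.pairs_count (k := k) (n := n) (h := h) hk hjh
        rw [← hS] at hpc
        have hcast : ∑ A ∈ S, (((NCAux.oneArcs A).powersetCard j).card : ℤ)
            = ((∑ A ∈ S, ((NCAux.oneArcs A).powersetCard j).card : ℕ) : ℤ) := by
          push_cast
          rfl
        rw [hcast, hpc]
        push_cast
        ring
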